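/- For every c ∈ (0,1) and P ∈ 𝒫₆ (rotations preserving the cube [-1,1]³), the tetrahedral rotation group 𝒫₄ is contained in the symmetry group of the attractor: Q·A(c,P) = A(c,P) for all Q ∈ 𝒫₄. -/

import Mathlib

/- STATEMENT 14: For every c ∈ (0,1) and P ∈ 𝒫₆, the tetrahedral group 𝒫₄ is contained in
the symmetry group of the attractor: Q·A(c,P) = A(c,P) for every Q ∈ 𝒫₄. -/
noncomputable section
open Matrix

abbrev E3 := EuclideanSpace ℝ (Fin 3)

def vtx : Fin 4 → E3 :=
  ![!₂[1, -1, 1], !₂[-1, 1, 1], !₂[-1, -1, -1], !₂[1, 1, -1]]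

/-- The other four vertices of the cube `[-1,1]³`. -/
def vtx' : Fin 4 → E3 :=
  ![!₂[1, 1, 1], !₂[-1, -1, 1], !₂[1, -1, -1], !₂[-1, 1, -1]]

/-- The cube `C₀ = [-1,1]³`. -/
def C0 : Set E3 := {x | ∀ i, x i ∈ Set.Icc (-1 : ℝ) 1}

/-- The regular tetrahedron `T₀` with vertices `v₁, v₂, v₃, v₄`. -/
def T0 : Set E3 := convexHull ℝ (Set.range vtx)

/-- Membership in the hexahedral group `𝒫₆`: rotations preserving the cube `C₀`. -/
def memP6 (Q : Matrix (Fin 3) (Fin 3) ℝ) : Prop :=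
  Q ∈ Matrix.specialOrthogonalGroup (Fin 3) ℝ ∧ Matrix.toEuclideanLin Q '' C0 = C0

/-- Membership in the tetrahedral group `𝒫₄`: rotations preserving the tetrahedron `T₀`. -/
def memP4 (Q : Matrix (Fin 3) (Fin 3) ℝ) : Prop :=
  Q ∈ Matrix.specialOrthogonalGroup (Fin 3) ℝ ∧ Matrix.toEuclideanLin Q '' T0 = T0

def fmap (c : ℝ) (P : Matrix (Fin 3) (Fin 3) ℝ) (i : Fin 4) (x : E3) : E3 :=
  c • Matrix.toEuclideanLin P x + vtx i

def IsAttractor (c : ℝ) (P : Matrix (Fin 3) (Fin 3) ℝ) (A : Set E3) : Prop :=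
  A.Nonempty ∧ IsCompact A ∧ A = ⋃ i : Fin 4, fmap c P i '' A

namespace P4Aux
open scoped RealInnerProductSpace

def Lm (M : Matrix (Fin 3) (Fin 3) ℝ) : E3 →ₗ[ℝ] E3 := Matrix.toEuclideanLin M

lemma Lm_comp (M N : Matrix (Fin 3) (Fin 3) ℝ) (x : E3) : Lm M (Lm N x) = Lm (M * N) x := by
  simp [Lm, Matrix.toEuclideanLin_apply, Matrix.mulVec_mulVec]

lemma Lm_one (x : E3) : Lm 1 x = x := by
  simp [Lm, Matrix.toEuclideanLin_apply]

lemma inner_eq (x y : E3) : ⟪x, y⟫ = ∑ i, x i * y i := by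
  simp [PiLp.inner_apply, RCLike.inner_apply, conj_trivial]
  exact Finset.sum_congr rfl (fun _ _ => mul_comm _ _)

lemma star_eq_t (M : Matrix (Fin 3) (Fin 3) ℝ) : star M = Mᵀ := by
  simp [Matrix.star_eq_conjTranspose]

lemma orth_tmul {M : Matrix (Fin 3) (Fin 3) ℝ} (hM : M ∈ Matrix.orthogonalGroup (Fin 3) ℝ) :
    Mᵀ * M = 1 := by
  have := (Matrix.mem_orthogonalGroup_iff' (Fin 3) ℝ).mp hM
  exact this

lemma Lm_inner {M : Matrix (Fin 3) (Fin 3) ℝ} (hM : M ∈ Matrix.orthogonalGroup (Fin 3) ℝ)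
    (x y : E3) : ⟪Lm M x, Lm M y⟫ = ⟪x, y⟫ := by
  have key : ∀ v w : Fin 3 → ℝ, (M *ᵥ v) ⬝ᵥ (M *ᵥ w) = v ⬝ᵥ w := by
    intro v w
    have h1 : M *ᵥ v = v ᵥ* Mᵀ := by
      rw [← Matrix.mulVec_transpose, Matrix.transpose_transpose]
    rw [Matrix.dotProduct_mulVec, h1, Matrix.vecMul_vecMul, orth_tmul hM, Matrix.vecMul_one]
  rw [inner_eq, inner_eq]
  exact key x y

lemma Lm_norm {M : Matrix (Fin 3) (Fin 3) ℝ} (hM : M ∈ Matrix.orthogonalGroup (Fin 3) ℝ)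
    (x : E3) : ‖Lm M x‖ = ‖x‖ := by
  have h1 := real_inner_self_eq_norm_sq (Lm M x)
  have h2 := real_inner_self_eq_norm_sq x
  rw [Lm_inner hM, h2] at h1
  calc ‖Lm M x‖ = Real.sqrt (‖Lm M x‖ ^ 2) := (Real.sqrt_sq (norm_nonneg _)).symm
    _ = Real.sqrt (‖x‖ ^ 2) := by rw [h1]
    _ = ‖x‖ := Real.sqrt_sq (norm_nonneg _)



def Vert : Set E3 := {x | ∀ i, x i = 1 ∨ x i = -1}

def sg (x : E3) : ℝ := x 0 * x 1 * x 2

lemma ext3 {x y : E3} (h0 : x 0 = y 0) (h1 : x 1 = y 1) (h2 : x 2 = y 2) : x = y := by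
  ext j
  fin_cases j <;> assumption

lemma vert_subset_C0 : Vert ⊆ C0 := by
  intro x hx i
  rcases hx i with h | h <;> rw [h] <;> norm_num

lemma vert_inner_self {x : E3} (hx : x ∈ Vert) : ⟪x, x⟫ = 3 := by
  rw [inner_eq, Fin.sum_univ_three]
  rcases hx 0 with h0 | h0 <;> rcases hx 1 with h1 | h1 <;> rcases hx 2 with h2 | h2 <;>
    rw [h0, h1, h2] <;> norm_num

lemma mem_vert_of_C0 {x : E3} (hx : x ∈ C0) (h : ⟪x, x⟫ = 3) : x ∈ Vert := by
  rw [inner_eq, Fin.sum_univ_three] at h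
  have b0 := hx 0; have b1 := hx 1; have b2 := hx 2
  rw [Set.mem_Icc] at b0 b1 b2
  have s0 : x 0 * x 0 = 1 := by nlinarith [b0.1, b0.2, b1.1, b1.2, b2.1, b2.2]
  have s1 : x 1 * x 1 = 1 := by nlinarith [b0.1, b0.2, b1.1, b1.2, b2.1, b2.2]
  have s2 : x 2 * x 2 = 1 := by nlinarith [b0.1, b0.2, b1.1, b1.2, b2.1, b2.2]
  intro i
  fin_cases i
  · exact mul_self_eq_one_iff.mp s0
  · exact mul_self_eq_one_iff.mp s1
  · exact mul_self_eq_one_iff.mp s2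

lemma sg_pm {x : E3} (hx : x ∈ Vert) : sg x = 1 ∨ sg x = -1 := by
  unfold sg
  rcases hx 0 with h0 | h0 <;> rcases hx 1 with h1 | h1 <;> rcases hx 2 with h2 | h2 <;>
    rw [h0, h1, h2] <;> norm_num

lemma key3 (a : Fin 3 → ℝ) (h : ∀ i, a i = 1 ∨ a i = -1) :
    a 0 * a 1 * a 2 = ((a 0 + a 1 + a 2) ^ 3 - 7 * (a 0 + a 1 + a 2)) / 6 := by
  rcases h 0 with h0 | h0 <;> rcases h 1 with h1 | h1 <;> rcases h 2 with h2 | h2 <;>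
    rw [h0, h1, h2] <;> norm_num

lemma sum3_le (a : Fin 3 → ℝ) (h : ∀ i, a i = 1 ∨ a i = -1)
    (hp : a 0 * a 1 * a 2 = -1) : a 0 + a 1 + a 2 ≤ 1 := by
  rcases h 0 with h0 | h0 <;> rcases h 1 with h1 | h1 <;> rcases h 2 with h2 | h2 <;>
    rw [h0, h1, h2] at hp ⊢ <;> norm_num at hp <;> norm_num

lemma sg_mul {u v : E3} (hu : u ∈ Vert) (hv : v ∈ Vert) :
    sg u * sg v = (⟪u, v⟫ ^ 3 - 7 * ⟪u, v⟫) / 6 := by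
  have h := key3 (fun i => u i * v i) (fun i => by
    rcases hu i with h1 | h1 <;> rcases hv i with h2 | h2 <;> simp [h1, h2])
  simp only at h
  rw [inner_eq, Fin.sum_univ_three]
  unfold sg
  linear_combination h

lemma inner_le_one {u v : E3} (hu : u ∈ Vert) (hv : v ∈ Vert)
    (hsu : sg u = 1) (hsv : sg v = -1) : ⟪u, v⟫ ≤ 1 := by
  have h := sum3_le (fun i => u i * v i) (fun i => by
    rcases hu i with h1 | h1 <;> rcases hv i with h2 | h2 <;> simp [h1, h2])
    (by simp only; unfold sg at hsu hsv; nlinarith)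
  simp only at h
  rw [inner_eq, Fin.sum_univ_three]
  exact h

lemma vtx_vert (i : Fin 4) : vtx i ∈ Vert ∧ sg (vtx i) = -1 := by
  fin_cases i <;>
    exact ⟨fun j => by fin_cases j <;> norm_num [vtx, Matrix.cons_val_two, Matrix.cons_val_three], by norm_num [vtx, Matrix.cons_val_two, Matrix.cons_val_three, sg]⟩

lemma vtx'_vert (i : Fin 4) : vtx' i ∈ Vert ∧ sg (vtx' i) = 1 := by
  fin_cases i <;>
    exact ⟨fun j => by fin_cases j <;> norm_num [vtx', Matrix.cons_val_two, Matrix.cons_val_three], by norm_num [vtx', Matrix.cons_val_two, Matrix.cons_val_three, sg]⟩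

lemma mem_range_vtx {x : E3} (hx : x ∈ Vert) (hs : sg x = -1) : ∃ i, vtx i = x := by
  unfold sg at hs
  rcases hx 0 with h0 | h0 <;> rcases hx 1 with h1 | h1 <;> rcases hx 2 with h2 | h2
  · exact absurd hs (by rw [h0, h1, h2]; norm_num)
  · exact ⟨3, ext3 (by rw [h0]; norm_num [vtx, Matrix.cons_val_two, Matrix.cons_val_three]) (by rw [h1]; norm_num [vtx, Matrix.cons_val_two, Matrix.cons_val_three]) (by rw [h2]; norm_num [vtx, Matrix.cons_val_two, Matrix.cons_val_three])⟩
  · exact ⟨0, ext3 (by rw [h0]; norm_num [vtx, Matrix.cons_val_two, Matrix.cons_val_three]) (by rw [h1]; norm_num [vtx, Matrix.cons_val_two, Matrix.cons_val_three]) (by rw [h2]; norm_num [vtx, Matrix.cons_val_two, Matrix.cons_val_three])⟩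
  · exact absurd hs (by rw [h0, h1, h2]; norm_num)
  · exact ⟨1, ext3 (by rw [h0]; norm_num [vtx, Matrix.cons_val_two, Matrix.cons_val_three]) (by rw [h1]; norm_num [vtx, Matrix.cons_val_two, Matrix.cons_val_three]) (by rw [h2]; norm_num [vtx, Matrix.cons_val_two, Matrix.cons_val_three])⟩
  · exact absurd hs (by rw [h0, h1, h2]; norm_num)
  · exact absurd hs (by rw [h0, h1, h2]; norm_num)
  · exact ⟨2, ext3 (by rw [h0]; norm_num [vtx, Matrix.cons_val_two, Matrix.cons_val_three]) (by rw [h1]; norm_num [vtx, Matrix.cons_val_two, Matrix.cons_val_three]) (by rw [h2]; norm_num [vtx, Matrix.cons_val_two, Matrix.cons_val_three])⟩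

lemma mem_range_vtx' {x : E3} (hx : x ∈ Vert) (hs : sg x = 1) : ∃ i, vtx' i = x := by
  unfold sg at hs
  rcases hx 0 with h0 | h0 <;> rcases hx 1 with h1 | h1 <;> rcases hx 2 with h2 | h2
  · exact ⟨0, ext3 (by rw [h0]; norm_num [vtx', Matrix.cons_val_two, Matrix.cons_val_three]) (by rw [h1]; norm_num [vtx', Matrix.cons_val_two, Matrix.cons_val_three]) (by rw [h2]; norm_num [vtx', Matrix.cons_val_two, Matrix.cons_val_three])⟩
  · exact absurd hs (by rw [h0, h1, h2]; norm_num)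
  · exact absurd hs (by rw [h0, h1, h2]; norm_num)
  · exact ⟨2, ext3 (by rw [h0]; norm_num [vtx', Matrix.cons_val_two, Matrix.cons_val_three]) (by rw [h1]; norm_num [vtx', Matrix.cons_val_two, Matrix.cons_val_three]) (by rw [h2]; norm_num [vtx', Matrix.cons_val_two, Matrix.cons_val_three])⟩
  · exact absurd hs (by rw [h0, h1, h2]; norm_num)
  · exact ⟨3, ext3 (by rw [h0]; norm_num [vtx', Matrix.cons_val_two, Matrix.cons_val_three]) (by rw [h1]; norm_num [vtx', Matrix.cons_val_two, Matrix.cons_val_three]) (by rw [h2]; norm_num [vtx', Matrix.cons_val_two, Matrix.cons_val_three])⟩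
  · exact ⟨1, ext3 (by rw [h0]; norm_num [vtx', Matrix.cons_val_two, Matrix.cons_val_three]) (by rw [h1]; norm_num [vtx', Matrix.cons_val_two, Matrix.cons_val_three]) (by rw [h2]; norm_num [vtx', Matrix.cons_val_two, Matrix.cons_val_three])⟩
  · exact absurd hs (by rw [h0, h1, h2]; norm_num)

lemma vtx_inj : Function.Injective vtx := by
  intro i j h
  have h0 : vtx i 0 = vtx j 0 := by rw [h]
  have h1 : vtx i 1 = vtx j 1 := by rw [h]
  fin_cases i <;> fin_cases j <;> revert h0 h1 <;> norm_num [vtx]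

lemma vtx'_inj : Function.Injective vtx' := by
  intro i j h
  have h0 : vtx' i 0 = vtx' j 0 := by rw [h]
  have h1 : vtx' i 1 = vtx' j 1 := by rw [h]
  fin_cases i <;> fin_cases j <;> revert h0 h1 <;> norm_num [vtx', Matrix.cons_val_two, Matrix.cons_val_three]

lemma neg_vert {x : E3} (hx : x ∈ Vert) : (-x) ∈ Vert ∧ sg (-x) = -sg x := by
  constructor
  · intro i
    rcases hx i with h | h <;> [right; left] <;>
      show -(x i) = _ <;> rw [h] <;> norm_num
  · show (-x) 0 * (-x) 1 * (-x) 2 = _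
    show -(x 0) * -(x 1) * -(x 2) = -(x 0 * x 1 * x 2)
    ring

lemma so_orth {M : Matrix (Fin 3) (Fin 3) ℝ} (hM : M ∈ Matrix.specialOrthogonalGroup (Fin 3) ℝ) :
    M ∈ Matrix.orthogonalGroup (Fin 3) ℝ :=
  ((Matrix.mem_specialOrthogonalGroup_iff).mp hM).1

lemma P6_vert {P : Matrix (Fin 3) (Fin 3) ℝ} (hP : memP6 P) {x : E3} (hx : x ∈ Vert) :
    Lm P x ∈ Vert := by
  have hC : Lm P x ∈ C0 := by
    rw [← hP.2]
    exact ⟨x, vert_subset_C0 hx, rfl⟩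
  exact mem_vert_of_C0 hC (by rw [Lm_inner (so_orth hP.1), vert_inner_self hx])

lemma P6_sg {P : Matrix (Fin 3) (Fin 3) ℝ} (hP : memP6 P) :
    ∃ e : ℝ, (e = 1 ∨ e = -1) ∧ ∀ x ∈ Vert, Lm P x ∈ Vert ∧ sg (Lm P x) = e * sg x := by
  have hv0 := vtx_vert 0
  set v := vtx 0 with hv
  have hLv : Lm P v ∈ Vert := P6_vert hP hv0.1
  refine ⟨-sg (Lm P v), ?_, ?_⟩
  · rcases sg_pm hLv with h | h <;> rw [h] <;> norm_num
  · intro x hx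
    refine ⟨P6_vert hP hx, ?_⟩
    have h1 : sg (Lm P x) * sg (Lm P v) = sg x * sg v := by
      rw [sg_mul (P6_vert hP hx) hLv, sg_mul hx hv0.1, Lm_inner (so_orth hP.1)]
    rw [hv0.2] at h1
    rcases sg_pm hLv with h | h <;> rw [h] at h1 ⊢ <;> nlinarith

lemma convex_C0 : Convex ℝ C0 := by
  intro x hx y hy a b ha hb hab
  intro i
  have hxi := hx i; have hyi := hy i
  rw [Set.mem_Icc] at hxi hyi ⊢
  have he : (a • x + b • y) i = a * x i + b * y i := rfl
  rw [he]
  constructor <;> nlinarith [hxi.1, hxi.2, hyi.1, hyi.2]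

lemma T0_subset_C0 : T0 ⊆ C0 := by
  apply convexHull_min _ convex_C0
  rintro x ⟨i, rfl⟩
  exact vert_subset_C0 (vtx_vert i).1

lemma P4_vtx {Q : Matrix (Fin 3) (Fin 3) ℝ} (hQ : memP4 Q) (i : Fin 4) :
    ∃ j, Lm Q (vtx i) = vtx j := by
  have hT : Lm Q (vtx i) ∈ T0 := by
    rw [← hQ.2]
    exact ⟨vtx i, subset_convexHull ℝ _ ⟨i, rfl⟩, rfl⟩
  have hVert : Lm Q (vtx i) ∈ Vert :=
    mem_vert_of_C0 (T0_subset_C0 hT)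
      (by rw [Lm_inner (so_orth hQ.1), vert_inner_self (vtx_vert i).1])
  rcases sg_pm hVert with hs | hs
  · exfalso
    set q := Lm Q (vtx i) with hq
    have hhalf : T0 ⊆ {x : E3 | ⟪q, x⟫ ≤ 1} := by
      apply convexHull_min _ ?_
      · rintro x ⟨j, rfl⟩
        exact inner_le_one hVert (vtx_vert j).1 hs (vtx_vert j).2
      · have hlin : IsLinearMap ℝ (fun x : E3 => ⟪q, x⟫) :=
          ⟨fun u w => inner_add_right q u w, fun r u => real_inner_smul_right q u r⟩
        exact convex_halfSpace_le hlin 1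
    have := hhalf hT
    have h3 : ⟪q, q⟫ = (3 : ℝ) := vert_inner_self hVert
    rw [Set.mem_setOf_eq, h3] at this
    linarith
  · obtain ⟨j, hj⟩ := mem_range_vtx hVert hs
    exact ⟨j, hj.symm⟩

lemma P4_vert {Q : Matrix (Fin 3) (Fin 3) ℝ} (hQ : memP4 Q) {x : E3} (hx : x ∈ Vert) :
    Lm Q x ∈ Vert ∧ sg (Lm Q x) = sg x := by
  rcases sg_pm hx with hs | hs
  · obtain ⟨i, hi⟩ := mem_range_vtx (neg_vert hx).1 (by rw [(neg_vert hx).2, hs])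
    obtain ⟨j, hj⟩ := P4_vtx hQ i
    have hx' : x = -(vtx i) := by rw [hi]; simp
    have : Lm Q x = -(vtx j) := by rw [hx', map_neg, hj]
    rw [this]
    exact ⟨(neg_vert (vtx_vert j).1).1, by simp [(neg_vert (vtx_vert j).1).2, (vtx_vert j).2, hs]⟩
  · obtain ⟨i, hi⟩ := mem_range_vtx hx hs
    obtain ⟨j, hj⟩ := P4_vtx hQ i
    rw [← hi, hj]
    exact ⟨(vtx_vert j).1, by rw [(vtx_vert j).2, (vtx_vert i).2]⟩

lemma pow_succ_apply (P : Matrix (Fin 3) (Fin 3) ℝ) (k : ℕ) (x : E3) :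
    (Lm P ^ (k + 1)) x = (Lm P ^ k) (Lm P x) := by
  rw [pow_succ, Module.End.mul_apply]

lemma pow_succ_apply' (P : Matrix (Fin 3) (Fin 3) ℝ) (k : ℕ) (x : E3) :
    (Lm P ^ (k + 1)) x = Lm P ((Lm P ^ k) x) := by
  rw [pow_succ', Module.End.mul_apply]

lemma pow_vert {P : Matrix (Fin 3) (Fin 3) ℝ} (hP : memP6 P) (k : ℕ) :
    ∃ e : ℝ, (e = 1 ∨ e = -1) ∧
      ∀ x ∈ Vert, (Lm P ^ k) x ∈ Vert ∧ sg ((Lm P ^ k) x) = e * sg x := by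
  induction k with
  | zero =>
    refine ⟨1, Or.inl rfl, fun x hx => ?_⟩
    rw [pow_zero]
    exact ⟨hx, (one_mul _).symm⟩
  | succ k ih =>
    obtain ⟨e, he, hk⟩ := ih
    obtain ⟨e1, he1, h1⟩ := P6_sg hP
    refine ⟨e * e1, ?_, ?_⟩
    · rcases he with h | h <;> rcases he1 with h' | h' <;> rw [h, h'] <;> norm_num
    · intro x hx
      have hx1 := h1 x hx
      have h2 := hk _ hx1.1
      rw [pow_succ_apply]
      exact ⟨h2.1, by rw [h2.2, hx1.2]; ring⟩

lemma pow_norm {P : Matrix (Fin 3) (Fin 3) ℝ} (hP : P ∈ Matrix.orthogonalGroup (Fin 3) ℝ)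
    (k : ℕ) (x : E3) : ‖(Lm P ^ k) x‖ = ‖x‖ := by
  induction k generalizing x with
  | zero => rw [pow_zero]; rfl
  | succ k ih => rw [pow_succ_apply, ih, Lm_norm hP]

lemma pow_inj {P : Matrix (Fin 3) (Fin 3) ℝ} (hP : P ∈ Matrix.orthogonalGroup (Fin 3) ℝ)
    (k : ℕ) {a b : E3} (hab : (Lm P ^ k) a = (Lm P ^ k) b) : a = b := by
  have h2 : ‖(Lm P ^ k) (a - b)‖ = ‖a - b‖ := pow_norm hP k _
  rw [map_sub, hab, sub_self, norm_zero] at h2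
  exact sub_eq_zero.mp (norm_eq_zero.mp h2.symm)

lemma QPk {P Q : Matrix (Fin 3) (Fin 3) ℝ} (hP : memP6 P) (hQ : memP4 Q) (k : ℕ) (i : Fin 4) :
    ∃ j, Lm Q ((Lm P ^ k) (vtx i)) = (Lm P ^ k) (vtx j) := by
  obtain ⟨e, he, hk⟩ := pow_vert hP k
  have hu := hk (vtx i) (vtx_vert i).1
  have hQu := P4_vert hQ hu.1
  rcases he with he | he
  · have hg : ∀ j, ∃ m, vtx m = (Lm P ^ k) (vtx j) := by
      intro j
      have h := hk (vtx j) (vtx_vert j).1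
      exact mem_range_vtx h.1 (by rw [h.2, (vtx_vert j).2, he]; norm_num)
    choose g hgspec using hg
    have hginj : Function.Injective g := by
      intro a b hab
      exact vtx_inj (pow_inj (so_orth hP.1) k (by rw [← hgspec a, ← hgspec b, hab]))
    obtain ⟨m, hm⟩ := mem_range_vtx hQu.1 (by rw [hQu.2, hu.2, (vtx_vert i).2, he]; norm_num)
    obtain ⟨j, hj⟩ := Finite.injective_iff_surjective.mp hginj m
    exact ⟨j, by rw [← hgspec j, hj, hm]⟩
  · have hg : ∀ j, ∃ m, vtx' m = (Lm P ^ k) (vtx j) := by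
      intro j
      have h := hk (vtx j) (vtx_vert j).1
      exact mem_range_vtx' h.1 (by rw [h.2, (vtx_vert j).2, he]; norm_num)
    choose g hgspec using hg
    have hginj : Function.Injective g := by
      intro a b hab
      exact vtx_inj (pow_inj (so_orth hP.1) k (by rw [← hgspec a, ← hgspec b, hab]))
    obtain ⟨m, hm⟩ := mem_range_vtx' hQu.1 (by rw [hQu.2, hu.2, (vtx_vert i).2, he]; norm_num)
    obtain ⟨j, hj⟩ := Finite.injective_iff_surjective.mp hginj m
    exact ⟨j, by rw [← hgspec j, hj, hm]⟩

lemma mem_attr {c : ℝ} {P : Matrix (Fin 3) (Fin 3) ℝ} {A : Set E3} (hA : IsAttractor c P A)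
    (n : ℕ) (w : ℕ → Fin 4) {b : E3} (hb : b ∈ A) :
    (∑ k ∈ Finset.range n, c ^ k • (Lm P ^ k) (vtx (w k))) + c ^ n • (Lm P ^ n) b ∈ A := by
  induction n generalizing w with
  | zero => simpa using hb
  | succ n ih =>
    have hmem := ih (fun k => w (k + 1))
    have heq : (∑ k ∈ Finset.range (n + 1), c ^ k • (Lm P ^ k) (vtx (w k)))
          + c ^ (n + 1) • (Lm P ^ (n + 1)) b
        = fmap c P (w 0) ((∑ k ∈ Finset.range n, c ^ k • (Lm P ^ k) (vtx (w (k + 1))))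
          + c ^ n • (Lm P ^ n) b) := by
      unfold fmap
      rw [Finset.sum_range_succ']
      have hL : ∀ y : E3, Matrix.toEuclideanLin P y = Lm P y := fun _ => rfl
      simp only [hL, map_add, map_sum, _root_.map_smul, smul_add, Finset.smul_sum, pow_zero,
        one_smul, Module.End.one_apply, smul_smul, ← pow_succ_apply', ← pow_succ']
      abel
    rw [heq, hA.2.2]
    exact Set.mem_iUnion.mpr ⟨w 0, _, hmem, rfl⟩

lemma decomp {c : ℝ} {P : Matrix (Fin 3) (Fin 3) ℝ} {A : Set E3} (hA : IsAttractor c P A)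
    (n : ℕ) : ∀ a ∈ A, ∃ (w : ℕ → Fin 4) (b : E3), b ∈ A ∧
      a = (∑ k ∈ Finset.range n, c ^ k • (Lm P ^ k) (vtx (w k))) + c ^ n • (Lm P ^ n) b := by
  induction n with
  | zero => exact fun a ha => ⟨fun _ => 0, a, ha, by simp⟩
  | succ n ih =>
    intro a ha
    have hmem : a ∈ ⋃ i : Fin 4, fmap c P i '' A := hA.2.2 ▸ ha
    obtain ⟨i, x, hxA, hax⟩ : ∃ i x, x ∈ A ∧ fmap c P i x = a := by
      simpa [Set.mem_iUnion] using hmem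
    obtain ⟨w, b, hb, hxe⟩ := ih x hxA
    refine ⟨fun k => Nat.casesOn k i (fun m => w m), b, hb, ?_⟩
    have hw0 : (fun k => Nat.casesOn k i (fun m => w m) : ℕ → Fin 4) 0 = i := rfl
    have hw1 : ∀ k, (fun k => Nat.casesOn k i (fun m => w m) : ℕ → Fin 4) (k + 1) = w k :=
      fun _ => rfl
    rw [← hax, hxe]
    unfold fmap
    rw [Finset.sum_range_succ']
    have hL : ∀ y : E3, Matrix.toEuclideanLin P y = Lm P y := fun _ => rfl
    simp only [hw0, hw1, hL, map_add, map_sum, _root_.map_smul, smul_add, Finset.smul_sum,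
      pow_zero, one_smul, Module.End.one_apply, smul_smul, ← pow_succ_apply', ← pow_succ']
    abel

lemma key_subset {c : ℝ} {P Q : Matrix (Fin 3) (Fin 3) ℝ} {A : Set E3}
    (hc : c ∈ Set.Ioo (0 : ℝ) 1) (hP : memP6 P) (hA : IsAttractor c P A) (hQ : memP4 Q) :
    Lm Q '' A ⊆ A := by
  obtain ⟨M, hM⟩ := isBounded_iff_forall_norm_le.mp hA.2.1.isBounded
  have hM0 : 0 ≤ M := le_trans (norm_nonneg _) (hM _ hA.1.some_mem)
  rintro _ ⟨a, ha, rfl⟩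
  have hcl : IsClosed A := hA.2.1.isClosed
  rw [← hcl.closure_eq, Metric.mem_closure_iff]
  intro ε hε
  have htend := tendsto_pow_atTop_nhds_zero_of_lt_one hc.1.le hc.2
  have hev : ∀ᶠ n : ℕ in Filter.atTop, c ^ n < ε / (2 * M + 1) :=
    htend.eventually (gt_mem_nhds (by positivity))
  obtain ⟨n, hn⟩ := hev.exists
  obtain ⟨w, b, hb, hab⟩ := decomp hA n a ha
  have hch : ∀ k : ℕ, ∃ j, Lm Q ((Lm P ^ k) (vtx (w k))) = (Lm P ^ k) (vtx j) :=
    fun k => QPk hP hQ k (w k)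
  choose w' hw' using hch
  refine ⟨(∑ k ∈ Finset.range n, c ^ k • (Lm P ^ k) (vtx (w' k))) + c ^ n • (Lm P ^ n) b,
    mem_attr hA n w' hb, ?_⟩
  have hQa : Lm Q a = (∑ k ∈ Finset.range n, c ^ k • (Lm P ^ k) (vtx (w' k)))
      + c ^ n • Lm Q ((Lm P ^ n) b) := by
    rw [hab, map_add, _root_.map_smul, map_sum]
    congr 1
    exact Finset.sum_congr rfl fun k _ => by rw [_root_.map_smul, hw' k]
  rw [hQa, dist_eq_norm]
  have hdiff : ((∑ k ∈ Finset.range n, c ^ k • (Lm P ^ k) (vtx (w' k)))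
        + c ^ n • Lm Q ((Lm P ^ n) b))
      - ((∑ k ∈ Finset.range n, c ^ k • (Lm P ^ k) (vtx (w' k))) + c ^ n • (Lm P ^ n) b)
      = c ^ n • (Lm Q ((Lm P ^ n) b) - (Lm P ^ n) b) := by
    rw [smul_sub]; abel
  rw [hdiff, norm_smul]
  have hc0 : (0 : ℝ) < c ^ n := pow_pos hc.1 n
  have hnorm : ‖Lm Q ((Lm P ^ n) b) - (Lm P ^ n) b‖ ≤ 2 * M := by
    have h1 : ‖Lm Q ((Lm P ^ n) b)‖ = ‖b‖ := by
      rw [Lm_norm (so_orth hQ.1), pow_norm (so_orth hP.1)]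
    have h2 : ‖(Lm P ^ n) b‖ = ‖b‖ := pow_norm (so_orth hP.1) n b
    calc ‖Lm Q ((Lm P ^ n) b) - (Lm P ^ n) b‖
        ≤ ‖Lm Q ((Lm P ^ n) b)‖ + ‖(Lm P ^ n) b‖ := norm_sub_le _ _
      _ = 2 * ‖b‖ := by rw [h1, h2]; ring
      _ ≤ 2 * M := by have := hM b hb; linarith
  have habs : ‖c ^ n‖ = c ^ n := by rw [Real.norm_eq_abs, abs_of_pos hc0]
  rw [habs]
  have hlt : (2 * M + 1) * c ^ n < ε := by
    have := (lt_div_iff₀ (by positivity : (0:ℝ) < 2 * M + 1)).mp hn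
    linarith
  nlinarith [mul_le_mul_of_nonneg_left hnorm hc0.le]

end P4Aux

theorem P4_subset_sym (c : ℝ) (hc : c ∈ Set.Ioo (0 : ℝ) 1)
    (P : Matrix (Fin 3) (Fin 3) ℝ) (hP : memP6 P)
    (A : Set E3) (hA : IsAttractor c P A)
    (Q : Matrix (Fin 3) (Fin 3) ℝ) (hQ : memP4 Q) :
    Matrix.toEuclideanLin Q '' A = A := by
  have h1 : P4Aux.Lm Q '' A ⊆ A := P4Aux.key_subset hc hP hA hQ
  have hso := hQ.1
  have horth := P4Aux.so_orth hso
  have hQQ : Qᵀ * Q = 1 := P4Aux.orth_tmul horth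
  have hQQ' : Q * Qᵀ = 1 := by
    have := (Matrix.mem_orthogonalGroup_iff (Fin 3) ℝ).mp horth
    exact this
  have hQT_so : Qᵀ ∈ Matrix.specialOrthogonalGroup (Fin 3) ℝ := by
    rw [Matrix.mem_specialOrthogonalGroup_iff]
    refine ⟨?_, ?_⟩
    · rw [Matrix.mem_orthogonalGroup_iff, Matrix.transpose_transpose]
      exact hQQ
    · rw [Matrix.det_transpose]
      exact ((Matrix.mem_specialOrthogonalGroup_iff).mp hso).2
  have hcomp1 : ∀ x : E3, P4Aux.Lm Qᵀ (P4Aux.Lm Q x) = x := fun x => by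
    rw [P4Aux.Lm_comp, hQQ, P4Aux.Lm_one]
  have hcomp2 : ∀ x : E3, P4Aux.Lm Q (P4Aux.Lm Qᵀ x) = x := fun x => by
    rw [P4Aux.Lm_comp, hQQ', P4Aux.Lm_one]
  have hT : Matrix.toEuclideanLin Qᵀ '' T0 = T0 := by
    conv_lhs => rw [← hQ.2]
    rw [Set.image_image]
    have : ∀ x : E3, Matrix.toEuclideanLin Qᵀ (Matrix.toEuclideanLin Q x) = x := hcomp1
    simp only [this, Set.image_id']
  have h2 : P4Aux.Lm Qᵀ '' A ⊆ A := P4Aux.key_subset hc hP hA ⟨hQT_so, hT⟩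
  show P4Aux.Lm Q '' A = A
  apply Set.Subset.antisymm h1
  intro a ha
  exact ⟨P4Aux.Lm Qᵀ a, h2 ⟨a, ha, rfl⟩, hcomp2 a⟩
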